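/- Let f : ∂X → ℝ be non-negative and bounded, and let f̃ be its extension by 0 to X. Then for every x ∈ X the limit h(x) = lim_{k→∞} ω_x^k(f̃) exists, where ω_x^k(f̃) = ∑_ζ λ^{⋄k}(x,ζ) f̃(ζ). -/

import Mathlib

open Filter Topology

open Classical in
noncomputable def dpow {X : Type*} (w : X → X → ℝ) : ℕ → X → X → ℝ
  | 0 => fun x y => if x = y then 1 else 0
  | k + 1 => fun x y => ∑ᶠ ζ, w x ζ * dpow w k ζ y

section Aux

variable {X : Type*} (w : X → X → ℝ)

lemma supp_dpow (hfin : ∀ x, (Function.support (w x)).Finite) :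
    ∀ k x, (Function.support (dpow w k x)).Finite := by
  intro k
  induction k with
  | zero =>
    intro x
    apply (Set.finite_singleton x).subset
    intro y hy
    simp only [Function.mem_support, dpow] at hy
    by_contra h
    simp only [Set.mem_singleton_iff] at h
    exact hy (if_neg (fun e => h e.symm))
  | succ k ih =>
    intro x
    apply ((hfin x).biUnion (fun ζ _ => ih ζ)).subset
    intro y hy
    simp only [Function.mem_support, dpow] at hy
    by_contra h
    apply hy
    apply finsum_eq_zero_of_forall_eq_zero
    intro ζ
    by_cases hw : w x ζ = 0
    · simp [hw]
    · have : dpow w k ζ y = 0 := by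
        by_contra hd
        exact h (Set.mem_biUnion (Function.mem_support.2 hw) (Function.mem_support.2 hd))
      simp [this]

lemma dpow_nonneg (hnn : ∀ x y, 0 ≤ w x y) : ∀ k x y, 0 ≤ dpow w k x y := by
  intro k
  induction k with
  | zero => intro x y; simp only [dpow]; split <;> norm_num
  | succ k ih =>
    intro x y
    simp only [dpow]
    exact finsum_nonneg fun ζ => mul_nonneg (hnn x ζ) (ih ζ y)

end Aux

/-- for nonnegative bounded boundary data extended by 0,
the limit h(x) = lim_k ω_x^k(f̃) exists. -/
theorem stmt_12 {X : Type*} [Countable X] (w : X → X → ℝ)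
    (hnn : ∀ x y, 0 ≤ w x y) (hfin : ∀ x, (Function.support (w x)).Finite)
    (hrow : ∀ x, ∑ᶠ y, w x y = 1)
    (f : X → ℝ) (hf0 : ∀ x, w x x = 1 → 0 ≤ f x)
    (hfb : ∃ M : ℝ, ∀ x, w x x = 1 → f x ≤ M) :
    ∀ x : X, ∃ L : ℝ,
      Tendsto (fun k => ∑ᶠ ζ, dpow w k x ζ * (if w ζ ζ = 1 then f ζ else 0))
        atTop (𝓝 L) := by
  classical
  obtain ⟨M, hM⟩ := hfb
  set g : X → ℝ := fun ζ => if w ζ ζ = 1 then f ζ else 0 with hg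
  have hg_nn : ∀ ζ, 0 ≤ g ζ := by
    intro ζ; simp only [hg]; split
    · exact hf0 ζ ‹_›
    · exact le_refl 0
  have hg_le : ∀ ζ, g ζ ≤ max M 0 := by
    intro ζ; simp only [hg]; split
    · exact le_trans (hM ζ ‹_›) (le_max_left _ _)
    · exact le_max_right _ _
  set a : ℕ → X → ℝ := fun k x => ∑ᶠ ζ, dpow w k x ζ * g ζ with ha
  -- nonnegativity of a
  have ha_nn : ∀ k x, 0 ≤ a k x := fun k x =>
    finsum_nonneg fun ζ => mul_nonneg (dpow_nonneg w hnn k x ζ) (hg_nn ζ)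
  -- a 0 = g
  have ha0 : ∀ x, a 0 x = g x := by
    intro x
    have : a 0 x = dpow w 0 x x * g x := by
      apply finsum_eq_single
      intro b hb
      have : dpow w 0 x b = 0 := by
        simp only [dpow]; exact if_neg (fun e => hb e.symm)
      simp [this]
    rw [this]; simp [dpow]
  -- recursion: a (k+1) x = ∑ᶠ ζ, w x ζ * a k ζ
  have hstep : ∀ k x, a (k + 1) x = ∑ᶠ ζ, w x ζ * a k ζ := by
    intro k x
    set S : Finset X := (hfin x).toFinset with hS
    have hU : (⋃ ζ ∈ (S : Set X), Function.support (dpow w k ζ)).Finite :=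
      Set.Finite.biUnion (S.finite_toSet) (fun ζ _ => supp_dpow w hfin k ζ)
    set T : Finset X := hU.toFinset with hT
    have hsum1 : ∀ y, dpow w (k + 1) x y = ∑ ζ ∈ S, w x ζ * dpow w k ζ y := by
      intro y
      apply finsum_eq_finset_sum_of_support_subset
      intro ζ hζ
      simp only [Function.mem_support] at hζ
      have : w x ζ ≠ 0 := fun h => hζ (by simp [h])
      simpa [hS, Set.Finite.mem_toFinset] using this
    have hsubT : Function.support (fun y => dpow w (k + 1) x y * g y) ⊆ (T : Set X) := by
      intro y hy
      simp only [Function.mem_support] at hy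
      have hne : dpow w (k + 1) x y ≠ 0 := fun h => hy (by simp [h])
      rw [hsum1 y] at hne
      obtain ⟨ζ, hζS, hζne⟩ := Finset.exists_ne_zero_of_sum_ne_zero hne
      have hd : dpow w k ζ y ≠ 0 := fun h => hζne (by simp [h])
      rw [hT, Set.Finite.coe_toFinset]
      exact Set.mem_biUnion (Finset.mem_coe.2 hζS) (Function.mem_support.2 hd)
    have hinner : ∀ ζ ∈ S, a k ζ = ∑ y ∈ T, dpow w k ζ y * g y := by
      intro ζ hζ
      apply finsum_eq_finset_sum_of_support_subset
      intro y hy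
      simp only [Function.mem_support] at hy
      have hd : dpow w k ζ y ≠ 0 := fun h => hy (by simp [h])
      rw [hT, Set.Finite.coe_toFinset]
      exact Set.mem_biUnion (Finset.mem_coe.2 hζ) (Function.mem_support.2 hd)
    calc a (k + 1) x = ∑ y ∈ T, dpow w (k + 1) x y * g y :=
          finsum_eq_finset_sum_of_support_subset _ hsubT
      _ = ∑ y ∈ T, ∑ ζ ∈ S, (w x ζ * dpow w k ζ y) * g y := by
          refine Finset.sum_congr rfl fun y _ => ?_
          rw [hsum1 y, Finset.sum_mul]
      _ = ∑ ζ ∈ S, w x ζ * ∑ y ∈ T, dpow w k ζ y * g y := by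
          rw [Finset.sum_comm]
          refine Finset.sum_congr rfl fun ζ _ => ?_
          rw [Finset.mul_sum]
          refine Finset.sum_congr rfl fun y _ => ?_
          ring
      _ = ∑ ζ ∈ S, w x ζ * a k ζ := by
          refine Finset.sum_congr rfl fun ζ hζ => ?_
          rw [hinner ζ hζ]
      _ = ∑ᶠ ζ, w x ζ * a k ζ := by
          symm
          apply finsum_eq_finset_sum_of_support_subset
          intro ζ hζ
          simp only [Function.mem_support] at hζ
          have : w x ζ ≠ 0 := fun h => hζ (by simp [h])
          simpa [hS, Set.Finite.mem_toFinset] using this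
  -- absorbing boundary
  have habs : ∀ x, w x x = 1 → ∀ y, y ≠ x → w x y = 0 := by
    intro x hx y hy
    set S : Finset X := (hfin x).toFinset with hS
    have hxS : x ∈ S := by
      simp only [hS, Set.Finite.mem_toFinset, Function.mem_support]
      rw [hx]; norm_num
    have hsum : ∑ ζ ∈ S, w x ζ = 1 := by
      rw [← hrow x]
      symm
      apply finsum_eq_finset_sum_of_support_subset
      intro ζ hζ
      simpa [hS, Set.Finite.mem_toFinset] using hζ
    have herase : ∑ ζ ∈ S.erase x, w x ζ = 0 := by
      have := Finset.add_sum_erase S (w x) hxS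
      rw [hsum, hx] at this
      linarith
    by_cases hyS : y ∈ S
    · exact (Finset.sum_eq_zero_iff_of_nonneg (fun ζ _ => hnn x ζ)).1 herase y
        (Finset.mem_erase.2 ⟨hy, hyS⟩)
    · by_contra h
      exact hyS (by simpa [hS, Set.Finite.mem_toFinset] using h)
  have hdelta : ∀ x, w x x = 1 → ∀ c : X → ℝ, ∑ᶠ ζ, w x ζ * c ζ = c x := by
    intro x hx c
    have : ∑ᶠ ζ, w x ζ * c ζ = w x x * c x := by
      apply finsum_eq_single
      intro b hb
      rw [habs x hx b hb, zero_mul]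
    rw [this, hx, one_mul]
  -- finsum inequality over the row x
  have hle : ∀ (u v : X → ℝ) (x : X), (∀ ζ, w x ζ * u ζ ≤ w x ζ * v ζ) →
      ∑ᶠ ζ, w x ζ * u ζ ≤ ∑ᶠ ζ, w x ζ * v ζ := by
    intro u v x h
    have h1 : ∑ᶠ ζ, w x ζ * u ζ = ∑ ζ ∈ (hfin x).toFinset, w x ζ * u ζ := by
      apply finsum_eq_finset_sum_of_support_subset
      intro ζ hζ
      simp only [Function.mem_support] at hζ
      have : w x ζ ≠ 0 := fun hw => hζ (by simp [hw])
      simpa [Set.Finite.mem_toFinset] using this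
    have h2 : ∑ᶠ ζ, w x ζ * v ζ = ∑ ζ ∈ (hfin x).toFinset, w x ζ * v ζ := by
      apply finsum_eq_finset_sum_of_support_subset
      intro ζ hζ
      simp only [Function.mem_support] at hζ
      have : w x ζ ≠ 0 := fun hw => hζ (by simp [hw])
      simpa [Set.Finite.mem_toFinset] using this
    rw [h1, h2]
    exact Finset.sum_le_sum fun ζ _ => h ζ
  -- monotone
  have hmono : ∀ k x, a k x ≤ a (k + 1) x := by
    intro k
    induction k with
    | zero =>
      intro x
      rw [ha0 x, hstep 0 x]
      by_cases hx : w x x = 1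
      · rw [hdelta x hx]
        rw [ha0 x]
      · have : g x = 0 := if_neg hx
        rw [this]
        exact finsum_nonneg fun ζ => mul_nonneg (hnn x ζ) (ha_nn 0 ζ)
    | succ k ih =>
      intro x
      rw [hstep k x, hstep (k + 1) x]
      exact hle _ _ x fun ζ => mul_le_mul_of_nonneg_left (ih ζ) (hnn x ζ)
  -- bounded
  have hbdd : ∀ k x, a k x ≤ max M 0 := by
    intro k
    induction k with
    | zero => intro x; rw [ha0 x]; exact hg_le x
    | succ k ih =>
      intro x
      rw [hstep k x]
      calc ∑ᶠ ζ, w x ζ * a k ζ ≤ ∑ᶠ ζ, w x ζ * max M 0 :=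
            hle _ _ x fun ζ => mul_le_mul_of_nonneg_left (ih ζ) (hnn x ζ)
        _ = (∑ᶠ ζ, w x ζ) * max M 0 := (finsum_mul _ _).symm
        _ = max M 0 := by rw [hrow x, one_mul]
  intro x
  refine ⟨⨆ k, a k x, ?_⟩
  apply tendsto_atTop_ciSup
  · exact monotone_nat_of_le_succ fun k => hmono k x
  · exact ⟨max M 0, by rintro r ⟨k, rfl⟩; exact hbdd k x⟩
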